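/- Let X be a topological space, 𝓕 a family of subsets of X, λ an infinite cardinal, and δ = min{2^{2^λ}, |𝓕|^λ} (cardinal exponentiation). Let X^δ denote the δ-th power of X with the product (Tychonoff) topology, and let 𝓕^δ be the family of all subsets of X^δ of the form ∏_{β<δ} F_β with each F_β ∈ 𝓕. If X^δ satisfies 𝓕^δ-CAP*_λ, then there exists an ultrafilter D uniform over λ such that X is 𝓕-D-compact. -/

import Mathlib

open Cardinal Set Topology

universe u

/-- `x` is a `lam`-complete accumulation point of the sequence `Y`. -/
def IsCompleteAccPt {X : Type u} [TopologicalSpace X] (lam : Cardinal.{u})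
    {ι : Type u} (Y : ι → Set X) (x : X) : Prop :=
  ∀ U ∈ nhds x, #{i : ι | (Y i ∩ U).Nonempty} = lam

/-- `X` satisfies `𝓕`-CAP*_λ. -/
def CapStar {X : Type u} [TopologicalSpace X] (F : Set (Set X)) (lam : Cardinal.{u}) : Prop :=
  ∀ Y : lam.ord.ToType → Set X, (∀ i, Y i ∈ F) → ∃ x : X, IsCompleteAccPt lam Y x

/-- `x` is a `D`-limit point of the family `Y`. -/
def IsDLimit {X : Type u} [TopologicalSpace X] {Z : Type v} (D : Ultrafilter Z)
    (Y : Z → Set X) (x : X) : Prop :=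
  ∀ U ∈ nhds x, {z : Z | (Y z ∩ U).Nonempty} ∈ D

/-- `X` is `𝓕`-`D`-compact: every `Z`-indexed family of members of `𝓕` has a `D`-limit point. -/
def FDCompact {X : Type u} [TopologicalSpace X] {Z : Type v} (F : Set (Set X))
    (D : Ultrafilter Z) : Prop :=
  ∀ Y : Z → Set X, (∀ z, Y z ∈ F) → ∃ x : X, IsDLimit D Y x

/-- The family of all products of `δ` members of `𝓕`, as subsets of the power `X^δ`. -/
def PowFamily {X : Type u} (F : Set (Set X)) (δ : Cardinal.{u}) :
    Set (Set (δ.ord.ToType → X)) :=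
  {s | ∃ f : δ.ord.ToType → Set X, (∀ β, f β ∈ F) ∧ s = Set.pi Set.univ f}

/-- The filter of sets whose complement has cardinality `< lam`. -/
def cosmall (Z : Type u) (lam : Cardinal.{u}) (hlam : Cardinal.aleph0 ≤ lam) : Filter Z where
  sets := {A | #(↥(Aᶜ)) < lam}
  univ_sets := by
    simp only [Set.mem_setOf_eq, Set.compl_univ]
    rw [Cardinal.mk_emptyCollection]
    exact lt_of_lt_of_le Cardinal.aleph0_pos hlam
  sets_of_superset := by
    intro A B hA hAB
    exact lt_of_le_of_lt (Cardinal.mk_le_mk_of_subset (Set.compl_subset_compl.mpr hAB)) hA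
  inter_sets := by
    intro A B hA hB
    simp only [Set.mem_setOf_eq, Set.compl_inter] at *
    exact lt_of_le_of_lt (Cardinal.mk_union_le _ _) (Cardinal.add_lt_of_lt hlam hA hB)

theorem mem_cosmall {Z : Type u} {lam : Cardinal.{u}} {hlam : Cardinal.aleph0 ≤ lam}
    {A : Set Z} : A ∈ cosmall Z lam hlam ↔ #(↥(Aᶜ)) < lam := Iff.rfl

/-- Key lemma: given a `δ`-indexed family `G` of `lam`-sequences of members of `F`,
`CAP*` for the power produces a single uniform ultrafilter `D` such that every `G β`
has a `D`-limit point. -/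
theorem keyLemma {X : Type u} [TopologicalSpace X] (F : Set (Set X)) (lam δ : Cardinal.{u})
    (hlam : Cardinal.aleph0 ≤ lam)
    (G : δ.ord.ToType → lam.ord.ToType → Set X)
    (hG : ∀ β z, G β z ∈ F)
    (h : CapStar (PowFamily F δ) lam) :
    ∃ D : Ultrafilter lam.ord.ToType, (∀ A ∈ D, #A = lam) ∧
      ∀ β, ∃ x, IsDLimit D (G β) x := by
  have hZ : #(lam.ord.ToType) = lam := by rw [Cardinal.mk_toType, Cardinal.card_ord]
  set Yprod : lam.ord.ToType → Set (δ.ord.ToType → X) :=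
    fun z => Set.pi Set.univ (fun β => G β z) with hYprod
  obtain ⟨x, hx⟩ := h Yprod (fun z => ⟨fun β => G β z, fun β => hG β z, rfl⟩)
  set T : Set (δ.ord.ToType → X) → Set lam.ord.ToType :=
    fun U => {z | (Yprod z ∩ U).Nonempty} with hT
  have hTmono : Monotone T := fun U V hUV z hz =>
    hz.mono (Set.inter_subset_inter_right _ hUV)
  set L : Filter lam.ord.ToType := (nhds x).lift' T with hL
  have hmemL : ∀ U ∈ nhds x, T U ∈ L := fun U hU => Filter.mem_lift' hU
  have hne : Filter.NeBot (L ⊓ cosmall lam.ord.ToType lam hlam) := by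
    rw [Filter.inf_neBot_iff]
    intro s hs t ht
    rw [hL, Filter.mem_lift'_sets hTmono] at hs
    obtain ⟨U, hU, hUs⟩ := hs
    have h1 : #(T U) = lam := hx U hU
    by_contra hemp
    rw [Set.not_nonempty_iff_eq_empty] at hemp
    have hsub : T U ⊆ tᶜ := by
      intro z hz hzt
      have : z ∈ s ∩ t := ⟨hUs hz, hzt⟩
      rw [hemp] at this
      exact this
    have hle := Cardinal.mk_le_mk_of_subset hsub
    rw [h1] at hle
    rw [mem_cosmall] at ht
    exact absurd (lt_of_le_of_lt hle ht) (lt_irrefl _)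
  set D : Ultrafilter lam.ord.ToType := @Ultrafilter.of _ _ hne with hD
  have hDle : (D : Filter lam.ord.ToType) ≤ L ⊓ cosmall lam.ord.ToType lam hlam :=
    Ultrafilter.of_le _
  have memD : ∀ s : Set lam.ord.ToType, s ∈ L ⊓ cosmall lam.ord.ToType lam hlam → s ∈ D :=
    fun s hs => hDle hs
  refine ⟨D, ?_, ?_⟩
  · intro A hA
    have hle : #A ≤ lam := le_of_le_of_eq (Cardinal.mk_set_le A) hZ
    by_contra hne'
    have hlt : #A < lam := lt_of_le_of_ne hle hne'
    have hAc : Aᶜ ∈ cosmall lam.ord.ToType lam hlam := by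
      rw [mem_cosmall, compl_compl]; exact hlt
    have hAcD : Aᶜ ∈ D := memD _ (Filter.mem_inf_of_right hAc)
    have : A ∩ Aᶜ ∈ D := Filter.inter_mem hA hAcD
    rw [Set.inter_compl_self] at this
    exact Filter.empty_notMem (D : Filter lam.ord.ToType) this
  · intro β
    refine ⟨x β, ?_⟩
    intro U' hU'
    have hU : (fun p : δ.ord.ToType → X => p β) ⁻¹' U' ∈ nhds x :=
      (continuous_apply β).continuousAt.preimage_mem_nhds hU'
    have hTU : T ((fun p : δ.ord.ToType → X => p β) ⁻¹' U') ∈ D :=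
      memD _ (Filter.mem_inf_of_left (hmemL _ hU))
    refine Filter.mem_of_superset hTU ?_
    rintro z ⟨p, hp1, hp2⟩
    exact ⟨p β, hp1 β (Set.mem_univ β), hp2⟩

theorem stmt13 {X : Type u} [TopologicalSpace X] (F : Set (Set X)) (lam : Cardinal.{u})
    (hlam : Cardinal.aleph0 ≤ lam)
    (δ : Cardinal.{u}) (hδ : δ = min ((2 : Cardinal.{u}) ^ ((2 : Cardinal.{u}) ^ lam)) (#F ^ lam))
    (h : CapStar (PowFamily F δ) lam) :
    ∃ D : Ultrafilter lam.ord.ToType, (∀ A ∈ D, #A = lam) ∧ FDCompact F D := by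
  by_contra hcon
  push_neg at hcon
  have hZ : #(lam.ord.ToType) = lam := by rw [Cardinal.mk_toType, Cardinal.card_ord]
  have hI : #(δ.ord.ToType) = δ := by rw [Cardinal.mk_toType, Cardinal.card_ord]
  have hlam0 : lam ≠ 0 := by
    intro h0; rw [h0] at hlam; exact absurd hlam (by simp [Cardinal.aleph0_ne_zero])
  have hZne : Nonempty lam.ord.ToType := by
    rw [← Cardinal.mk_ne_zero_iff, hZ]; exact hlam0
  rcases le_total (#F ^ lam) ((2 : Cardinal.{u}) ^ ((2 : Cardinal.{u}) ^ lam)) with hba | hab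
  · -- δ = #F ^ lam : enumerate all sequences
    have hδ' : δ = #F ^ lam := by rw [hδ, min_eq_right hba]
    have hcard : #(δ.ord.ToType) = #(lam.ord.ToType → ↥F) := by
      rw [hI, hδ', ← Cardinal.power_def, hZ]
    obtain ⟨e⟩ := Cardinal.eq.mp hcard
    set G : δ.ord.ToType → lam.ord.ToType → Set X := fun β z => ((e β) z : Set X) with hGdef
    obtain ⟨D, hDuni, hDlim⟩ := keyLemma F lam δ hlam G (fun β z => (e β z).2) h
    refine hcon D hDuni ?_
    intro Y hY
    obtain ⟨β, hβ⟩ := e.surjective (fun z => (⟨Y z, hY z⟩ : ↥F))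
    obtain ⟨pt, hpt⟩ := hDlim β
    have hGY : G β = Y := by
      funext z
      rw [hGdef]
      simp only [hβ]
    exact ⟨pt, hGY ▸ hpt⟩
  · -- δ = 2 ^ 2 ^ lam : enumerate all ultrafilters
    have hδ' : δ = (2 : Cardinal.{u}) ^ ((2 : Cardinal.{u}) ^ lam) := by
      rw [hδ, min_eq_left hab]
    have hFne : Nonempty ↥F := by
      rcases eq_or_ne (#↥F) 0 with h0 | h0
      · exfalso
        rw [h0, Cardinal.zero_power hlam0] at hab
        exact absurd hab (not_le.mpr (Cardinal.power_pos _ two_pos))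
      · exact Cardinal.mk_ne_zero_iff.mp h0
    have hinj : Function.Injective (fun D : Ultrafilter lam.ord.ToType => {A | A ∈ D}) := by
      intro D1 D2 hDD
      apply Ultrafilter.coe_injective
      apply Filter.ext
      intro A
      exact Set.ext_iff.mp hDD A
    have hUcard : #(Ultrafilter lam.ord.ToType) ≤ #(δ.ord.ToType) := by
      rw [hI, hδ']
      calc #(Ultrafilter lam.ord.ToType) ≤ #(Set (Set lam.ord.ToType)) :=
            Cardinal.mk_le_of_injective hinj
        _ = (2 : Cardinal.{u}) ^ ((2 : Cardinal.{u}) ^ lam) := by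
            rw [Cardinal.mk_set, Cardinal.mk_set, hZ]
    haveI : Nonempty (Ultrafilter lam.ord.ToType) := ⟨pure hZne.some⟩
    obtain ⟨emb⟩ := (Cardinal.le_def _ _).mp hUcard
    have hsurj := Function.invFun_surjective emb.injective
    set s : δ.ord.ToType → Ultrafilter lam.ord.ToType := Function.invFun emb with hs
    have hW : ∀ D : Ultrafilter lam.ord.ToType, ∃ Y : lam.ord.ToType → Set X,
        (∀ z, Y z ∈ F) ∧ ((∀ A ∈ D, #A = lam) → ∀ pt, ¬ IsDLimit D Y pt) := by
      intro D
      by_cases hu : ∀ A ∈ D, #A = lam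
      · have hnc := hcon D hu
        unfold FDCompact at hnc
        push_neg at hnc
        obtain ⟨Y, hY1, hY2⟩ := hnc
        exact ⟨Y, hY1, fun _ => hY2⟩
      · exact ⟨fun _ => hFne.some, fun _ => hFne.some.2, fun h' => absurd h' hu⟩
    choose W hW1 hW2 using hW
    obtain ⟨D, hDuni, hDlim⟩ :=
      keyLemma F lam δ hlam (fun β => W (s β)) (fun β z => hW1 (s β) z) h
    obtain ⟨β, hβ⟩ := hsurj D
    obtain ⟨pt, hpt⟩ := hDlim β
    have hbad := hW2 (s β)
    rw [hβ] at hbad hpt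
    exact hbad hDuni pt hpt
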